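/- Let M be a commutative additive monoid and a ∈ M with sr(a) = n < ∞. If k is an integer with k ≥ 2 and n ≥ max(2, k(k−1)(k−2)), then there exists a positive integer l such that sr(l·a) = k. -/

import Mathlib

/-- `a` satisfies the `n`-stable rank condition in `M`. -/
def SRCond {M : Type*} [AddCommMonoid M] (a : M) (n : ℕ) : Prop :=
  ∀ x y : M, n • a + x = a + y → ∃ e : M, n • a = a + e ∧ e + x = y

/-- The stable rank of `a`: the least positive integer `n` such that `a` satisfies
the `n`-stable rank condition, or `∞` if no such `n` exists. -/
noncomputable def sr {M : Type*} [AddCommMonoid M] (a : M) : ℕ∞ :=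
  sInf {n : ℕ∞ | ∃ m : ℕ, 0 < m ∧ SRCond a m ∧ n = (m : ℕ∞)}

section Aux

variable {M : Type*} [AddCommMonoid M]

/-- The auxiliary "division with cancellation" relation. -/
def SRDiv (b c : M) : Prop :=
  ∀ x y : M, b + x = c + y → ∃ f : M, b = c + f ∧ f + x = y

lemma SRDiv.add_left {b c : M} (h : SRDiv b c) (d : M) : SRDiv (d + b) c := by
  intro x y hxy
  have h1 : b + (d + x) = c + y := by
    rw [← hxy]; simp [add_assoc, add_comm, add_left_comm]
  obtain ⟨f, hf1, hf2⟩ := h _ _ h1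
  refine ⟨f + d, ?_, ?_⟩
  · rw [hf1]; simp [add_assoc, add_comm, add_left_comm]
  · rw [← hf2]; simp [add_assoc, add_comm, add_left_comm]

lemma SRDiv.of_add_right {b c d : M} (h : SRDiv b (c + d)) : SRDiv b c := by
  intro x y hxy
  have h1 : b + (d + x) = (c + d) + y := by
    calc b + (d + x) = (b + x) + d := by simp [add_assoc, add_comm, add_left_comm]
      _ = (c + y) + d := by rw [hxy]
      _ = (c + d) + y := by simp [add_assoc, add_comm, add_left_comm]
  obtain ⟨f, hf1, hf2⟩ := h _ _ h1
  refine ⟨f + d, ?_, ?_⟩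
  · rw [hf1]; simp [add_assoc, add_comm, add_left_comm]
  · rw [← hf2]; simp [add_assoc, add_comm, add_left_comm]

lemma SRDiv.succ_smul_left {a c : M} {p : ℕ} (h : SRDiv (p • a) c) : SRDiv ((p + 1) • a) c := by
  have h2 := h.add_left a
  have e : (p + 1) • a = a + p • a := by rw [succ_nsmul]; exact add_comm _ _
  rw [e]; exact h2

/-- Key upper bound lemma: if `a` satisfies the `N`-stable rank condition then
`(N+q)•a` is `SRDiv`-divisible by `(q+1)•a`. -/
lemma sdiv_upper {a : M} {N : ℕ} (h : SRCond a N) :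
    ∀ q : ℕ, SRDiv ((N + q) • a) ((q + 1) • a) := by
  intro q
  induction q with
  | zero =>
    simp only [Nat.add_zero, Nat.zero_add, one_nsmul]
    exact h
  | succ q ih =>
    intro x y hxy
    have h1 : N • a + ((q + 1) • a + x) = a + ((q + 1) • a + y) := by
      calc N • a + ((q + 1) • a + x) = (N + (q + 1)) • a + x := by
            rw [add_nsmul a N (q + 1)]; simp [add_assoc]
        _ = ((q + 1) + 1) • a + y := hxy
        _ = a + ((q + 1) • a + y) := by
            rw [succ_nsmul a (q + 1)]; simp [add_assoc, add_comm, add_left_comm]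
    obtain ⟨e, he1, he2⟩ := h _ _ h1
    have h3 : (N + q) • a + x = (q + 1) • a + y := by
      calc (N + q) • a + x = e + ((q + 1) • a + x) := by
            rw [add_nsmul a N q, he1, succ_nsmul a q]
            simp [add_assoc, add_comm, add_left_comm]
        _ = (q + 1) • a + y := he2
    obtain ⟨f, hf1, hf2⟩ := ih x y h3
    refine ⟨f, ?_, hf2⟩
    calc (N + (q + 1)) • a = a + (N + q) • a := by
          rw [show N + (q + 1) = (N + q) + 1 from rfl, succ_nsmul a (N + q)]
          exact add_comm _ _
      _ = a + ((q + 1) • a + f) := by rw [hf1]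
      _ = ((q + 1) + 1) • a + f := by
          rw [succ_nsmul a (q + 1)]; simp [add_assoc, add_comm, add_left_comm]

end Aux

theorem stmt_13 {M : Type*} [AddCommMonoid M] (a : M) (n k : ℕ)
    (h : sr a = (n : ℕ∞)) (hk : 2 ≤ k)
    (hn : max 2 (k * (k - 1) * (k - 2)) ≤ n) :
    ∃ l : ℕ, 0 < l ∧ sr (l • a) = (k : ℕ∞) := by
  classical
  have hn2 : 2 ≤ n := le_trans (le_max_left _ _) hn
  unfold sr at h
  -- minimality of n
  have hmin0 : ∀ m : ℕ, 0 < m → SRCond a m → n ≤ m := by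
    intro m hm hc
    have h1 : sInf {N : ℕ∞ | ∃ m : ℕ, 0 < m ∧ SRCond a m ∧ N = (m : ℕ∞)} ≤ (m : ℕ∞) :=
      sInf_le ⟨m, hm, hc, rfl⟩
    rw [h] at h1
    exact_mod_cast h1
  -- existence of some good m
  have hex0 : ∃ m : ℕ, 0 < m ∧ SRCond a m := by
    by_contra hcon
    push_neg at hcon
    have hemp : {N : ℕ∞ | ∃ m : ℕ, 0 < m ∧ SRCond a m ∧ N = (m : ℕ∞)} = ∅ := by
      ext N
      simp only [Set.mem_setOf_eq, Set.mem_empty_iff_false, iff_false]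
      rintro ⟨m, hm, hc, rfl⟩
      exact hcon m hm hc
    rw [hemp, sInf_empty] at h
    exact (by simp : ((⊤ : ℕ∞) ≠ (n : ℕ∞))) h
  -- n itself satisfies the condition
  have hcond : SRCond a n := by
    obtain ⟨m₁, hm₁, hc₁⟩ := hex0
    have hmem₀ := Nat.sInf_mem (⟨m₁, hm₁, hc₁⟩ : {m : ℕ | 0 < m ∧ SRCond a m}.Nonempty)
    obtain ⟨hpos₀, hcond₀⟩ := hmem₀
    set m₀ := sInf {m : ℕ | 0 < m ∧ SRCond a m} with hm₀
    have h1 : (n : ℕ∞) ≤ (m₀ : ℕ∞) := by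
      rw [← h]; exact sInf_le ⟨m₀, hpos₀, hcond₀, rfl⟩
    have h2 : (m₀ : ℕ∞) ≤ (n : ℕ∞) := by
      rw [← h]
      refine le_sInf ?_
      rintro b ⟨m, hm, hc, rfl⟩
      have h4 : sInf {m : ℕ | 0 < m ∧ SRCond a m} ≤ m := Nat.sInf_le ⟨hm, hc⟩
      rw [← hm₀] at h4
      exact_mod_cast h4
    have h3 : m₀ = n := by exact_mod_cast le_antisymm h2 h1
    rw [← h3]; exact hcond₀
  -- the function t
  let t : ℕ → ℕ := fun q => sInf {p : ℕ | SRDiv (p • a) (q • a)}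
  have hmemt : ∀ q : ℕ, SRDiv ((t (q + 1)) • a) ((q + 1) • a) := by
    intro q
    have hne : {p : ℕ | SRDiv (p • a) ((q + 1) • a)}.Nonempty := ⟨n + q, sdiv_upper hcond q⟩
    exact Nat.sInf_mem hne
  have hlet : ∀ q p : ℕ, SRDiv (p • a) (q • a) → t q ≤ p := fun q p hp => Nat.sInf_le hp
  have hub : ∀ q : ℕ, t (q + 1) ≤ n + q := fun q => hlet _ _ (sdiv_upper hcond q)
  have hclosed : ∀ q p : ℕ, t (q + 1) ≤ p → SRDiv (p • a) ((q + 1) • a) := by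
    intro q p hp
    induction p, hp using Nat.le_induction with
    | base => exact hmemt q
    | succ p hp ih => exact ih.succ_smul_left
  have hqdown : ∀ q p : ℕ, SRDiv (p • a) ((q + 1) • a) → SRDiv (p • a) (q • a) := by
    intro q p hp
    rw [succ_nsmul a q] at hp
    exact hp.of_add_right
  have hdown1 : ∀ q p : ℕ, SRDiv (p • a) ((q + 1) • a) → SRDiv (p • a) ((1 : ℕ) • a) := by
    intro q
    induction q with
    | zero => intro p hp; exact hp
    | succ q ih => intro p hp; exact ih p (hqdown (q + 1) p hp)
  have hlb : ∀ q : ℕ, n ≤ t (q + 1) := by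
    intro q
    have h1 : SRDiv ((t (q + 1)) • a) ((1 : ℕ) • a) := hdown1 q _ (hmemt q)
    rcases Nat.eq_zero_or_pos (t (q + 1)) with h0 | hpos
    · exfalso
      have h2 : SRDiv ((t (q + 1) + 1) • a) ((1 : ℕ) • a) := h1.succ_smul_left
      rw [one_nsmul a] at h2
      have h4 := hmin0 _ (by omega) h2
      omega
    · rw [one_nsmul a] at h1
      exact hmin0 _ hpos h1
  have hmono : ∀ q : ℕ, t (q + 1) ≤ t (q + 1 + 1) := fun q =>
    hlet _ _ (hqdown (q + 1) _ (hmemt (q + 1)))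
  -- find a suitable l
  have hex : ∃ l : ℕ, 0 < l ∧ (k - 1) * l < t l ∧ t l ≤ k * l := by
    rcases eq_or_lt_of_le hk with hk2 | hk3
    · -- k = 2
      subst hk2
      obtain ⟨q, rfl⟩ : ∃ q, n = q + 2 := ⟨n - 2, by omega⟩
      refine ⟨q + 1, by omega, ?_, ?_⟩
      · have h1 := hlb q
        set T := t (q + 1); omega
      · have h1 := hub q
        set T := t (q + 1); omega
    · -- k ≥ 3
      obtain ⟨j, rfl⟩ : ∃ j, k = j + 3 := ⟨k - 3, by omega⟩
      have e1 : j + 3 - 1 = j + 2 := by omega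
      have e2 : j + 3 - 2 = j + 1 := by omega
      have hnk : (j + 3) * (j + 2) * (j + 1) ≤ n := by
        have h1 := le_trans (le_max_right 2 ((j + 3) * (j + 3 - 1) * (j + 3 - 2))) hn
        rwa [e1, e2] at h1
      have hcube : j + 3 < (j + 3) * (j + 2) * (j + 1) := by
        calc j + 3 < (j + 3) * 2 * 1 := by omega
          _ ≤ (j + 3) * (j + 2) * (j + 1) :=
            Nat.mul_le_mul (Nat.mul_le_mul_left (j + 3) (by omega)) (by omega)
      have hkn : j + 3 < n := lt_of_lt_of_le hcube hnk
      have hsq : (j + 2) * (j + 2) < n := by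
        have h1 : (j + 2) * (j + 2) < (j + 3) * (j + 2) * (j + 1) := by nlinarith
        exact lt_of_lt_of_le h1 hnk
      set Q := Nat.findGreatest (fun q => (j + 3) * q < t q) n with hQ
      have hP1 : (fun q => (j + 3) * q < t q) 1 := by
        show (j + 3) * 1 < t 1
        have h1 : n ≤ t 1 := hlb 0
        set T := t 1; omega
      have hQP : (j + 3) * Q < t Q := by
        rw [hQ]
        exact Nat.findGreatest_spec (P := fun q => (j + 3) * q < t q)
          (show 1 ≤ n by omega) hP1
      have ht0 : t 0 ≤ 0 := by
        refine Nat.sInf_le ?_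
        show SRDiv ((0 : ℕ) • a) ((0 : ℕ) • a)
        intro x y hxy
        refine ⟨0, by simp, ?_⟩
        simpa [zero_nsmul] using hxy
      have hQ1 : 1 ≤ Q := by
        rcases Nat.eq_zero_or_pos Q with h0 | h; swap; · exact h
        exfalso
        rw [h0] at hQP
        omega
      obtain ⟨q', hq'⟩ : ∃ q', Q = q' + 1 := ⟨Q - 1, by omega⟩
      have hub' := hub q'
      have hQn : Q + 1 ≤ n := by
        have h2' := hQP
        rw [hq'] at h2'
        have h3 : 3 * (q' + 1) ≤ (j + 3) * (q' + 1) := Nat.mul_le_mul_right _ (by omega)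
        set A := (j + 3) * (q' + 1)
        set B := t (q' + 1)
        omega
      have hgreat : ∀ m : ℕ, Q < m → m ≤ n → ¬ ((j + 3) * m < t m) := by
        intro m hm1 hm2 hc
        rw [hQ] at hm1
        exact Nat.findGreatest_is_greatest hm1 hm2 hc
      have hUB1 : t (Q + 1) ≤ (j + 3) * (Q + 1) := by
        have h4 := hgreat (Q + 1) (by omega) hQn
        push_neg at h4
        exact h4
      by_cases hY : (j + 2) * (Q + 1) < t (Q + 1)
      · exact ⟨Q + 1, by omega, by rw [e1]; exact hY, hUB1⟩
      · push_neg at hY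
        have hmo : t Q ≤ t (Q + 1) := by
          rw [hq']; exact hmono q'
        have hQlt : Q < j + 2 := by
          have hA : (j + 2) * (Q + 1) = (j + 2) * Q + (j + 2) := by ring
          have hB : (j + 3) * Q = (j + 2) * Q + Q := by ring
          set C := (j + 2) * Q
          set D := (j + 2) * (Q + 1)
          set T1 := t Q
          set T2 := t (Q + 1)
          omega
        have hj2n : j + 2 ≤ n := by omega
        have hUB2 : t (j + 2) ≤ (j + 3) * (j + 2) := by
          have h4 := hgreat (j + 2) (by omega) hj2n
          push_neg at h4
          exact h4
        have hLB2 : (j + 2) * (j + 2) < t (j + 2) := by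
          have h5 : n ≤ t (j + 2) := hlb (j + 1)
          set F := (j + 2) * (j + 2)
          set T := t (j + 2)
          omega
        exact ⟨j + 2, by omega, by rw [e1]; exact hLB2, hUB2⟩
  -- conclude
  obtain ⟨l, hl0, hlow, hhigh⟩ := hex
  obtain ⟨q₀, rfl⟩ : ∃ q₀, l = q₀ + 1 := ⟨l - 1, by omega⟩
  have hSD : SRDiv ((k * (q₀ + 1)) • a) ((q₀ + 1) • a) := hclosed q₀ _ hhigh
  have hcondk : SRCond ((q₀ + 1) • a) k := by
    intro x y hxy
    rw [smul_smul] at hxy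
    obtain ⟨f, h1, h2⟩ := hSD x y hxy
    exact ⟨f, by rw [smul_smul]; exact h1, h2⟩
  have hminl : ∀ m : ℕ, 0 < m → SRCond ((q₀ + 1) • a) m → k ≤ m := by
    intro m hm hc
    have hSD' : SRDiv ((m * (q₀ + 1)) • a) ((q₀ + 1) • a) := by
      intro x y hxy
      rw [← smul_smul] at hxy
      obtain ⟨f, h1, h2⟩ := hc x y hxy
      exact ⟨f, by rw [← smul_smul]; exact h1, h2⟩
    have hle' : t (q₀ + 1) ≤ m * (q₀ + 1) := hlet _ _ hSD'
    by_contra hcon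
    push_neg at hcon
    have h6 : m * (q₀ + 1) ≤ (k - 1) * (q₀ + 1) := Nat.mul_le_mul_right _ (by omega)
    set X := m * (q₀ + 1)
    set Y := (k - 1) * (q₀ + 1)
    set T := t (q₀ + 1)
    omega
  refine ⟨q₀ + 1, by omega, ?_⟩
  unfold sr
  apply le_antisymm
  · exact sInf_le ⟨k, by omega, hcondk, rfl⟩
  · refine le_sInf ?_
    rintro b ⟨m, hm, hcm, rfl⟩
    exact_mod_cast hminl m hm hcm
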